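/- A commutative cancellative monoid M is a finite factorization monoid if and only if M is atomic and M is an IDF monoid. -/

import Mathlib

/-- The set of factorizations of `a`: multisets of atoms (irreducible elements), counted up
to associates, whose product is associated to `a`. -/
def FactorizationsOf {α : Type*} [CommMonoid α] (a : α) : Set (Multiset (Associates α)) :=
  {s | (∀ p ∈ s, Irreducible p) ∧ s.prod = Associates.mk a}

/-- An element is atomic if it is a unit or a finite product of atoms; equivalently, some
finite multiset of atoms has product associated to it. -/
def IsAtomicElem {α : Type*} [CommMonoid α] (a : α) : Prop :=
  ∃ s : Multiset α, (∀ p ∈ s, Irreducible p) ∧ Associated s.prod a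

/-- A monoid is a finite factorization monoid (FFM) if every element has a nonempty finite
set of factorizations. -/
def IsFFM (α : Type*) [CommMonoid α] : Prop :=
  ∀ a : α, (FactorizationsOf a).Nonempty ∧ (FactorizationsOf a).Finite

/-- A monoid has the IDF property if every element is divisible by only finitely many
atoms up to associates. -/
def IsIDFMonoid (α : Type*) [CommMonoid α] : Prop :=
  ∀ a : α, {p : Associates α | Irreducible p ∧ p ∣ Associates.mk a}.Finite

section Aux

variable {M : Type*} [CancelCommMonoid M]

lemma mk_irreducible_iff {a : M} :
    Irreducible (Associates.mk a) ↔ Irreducible a := by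
  constructor
  · intro h
    refine ⟨fun hu => h.not_isUnit (Associates.isUnit_mk.2 hu), fun b c hbc => ?_⟩
    rcases h.isUnit_or_isUnit (by rw [hbc, Associates.mk_mul_mk]) with h' | h'
    · exact Or.inl (Associates.isUnit_mk.1 h')
    · exact Or.inr (Associates.isUnit_mk.1 h')
  · intro h
    refine ⟨fun hu => h.not_isUnit (Associates.isUnit_mk.1 hu), fun x y hxy => ?_⟩
    obtain ⟨b, rfl⟩ := Associates.mk_surjective x
    obtain ⟨c, rfl⟩ := Associates.mk_surjective y
    rw [Associates.mk_mul_mk, Associates.mk_eq_mk_iff_associated] at hxy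
    obtain ⟨u, hu⟩ := hxy
    have heq : a = b * (c * ↑u⁻¹) := by
      rw [← mul_assoc, ← hu, mul_assoc, Units.mul_inv, mul_one]
    rcases h.isUnit_or_isUnit heq with h' | h'
    · exact Or.inl (Associates.isUnit_mk.2 h')
    · exact Or.inr (Associates.isUnit_mk.2 (isUnit_of_mul_isUnit_left h'))

lemma assoc_cancel (a c : Associates M) (h : a * c = a) : c = 1 := by
  obtain ⟨x, rfl⟩ := Associates.mk_surjective a
  obtain ⟨y, rfl⟩ := Associates.mk_surjective c
  rw [Associates.mk_mul_mk, Associates.mk_eq_mk_iff_associated] at h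
  obtain ⟨u, hu⟩ := h
  have h2 : x * (y * ↑u) = x * 1 := by rw [mul_one, ← mul_assoc]; exact hu
  exact Associates.mk_eq_one.2 (IsUnit.of_mul_eq_one (u : M) (mul_left_cancel h2))

lemma factorizations_antichain_le {a : M} {s t : Multiset (Associates M)}
    (hs : s ∈ FactorizationsOf a) (ht : t ∈ FactorizationsOf a) (hle : s ≤ t) : s = t := by
  classical
  obtain ⟨hsirr, hsprod⟩ := hs
  obtain ⟨htirr, htprod⟩ := ht
  have hadd : s + (t - s) = t := add_tsub_cancel_of_le hle
  have hprod : s.prod * (t - s).prod = s.prod := by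
    rw [← Multiset.prod_add, hadd, htprod, hsprod]
  have h1 : (t - s).prod = 1 := assoc_cancel _ _ hprod
  have hzero : t - s = 0 := by
    by_contra hne
    obtain ⟨x, hx⟩ := Multiset.exists_mem_of_ne_zero hne
    have hxt : x ∈ t := Multiset.mem_of_le (tsub_le_self) hx
    have : x = 1 := (Associates.prod_eq_one_iff).1 h1 x hx
    exact (htirr x hxt).not_isUnit (this ▸ isUnit_one)
  rw [← hadd, hzero, add_zero]

lemma factorizations_finite {a : M} (hT : {p : Associates M | Irreducible p ∧ p ∣ Associates.mk a}.Finite) :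
    (FactorizationsOf a).Finite := by
  classical
  set T := hT.toFinset with hTdef
  set Z := FactorizationsOf a with hZ
  -- every element of a factorization lies in T
  have hmemT : ∀ {s : Multiset (Associates M)}, s ∈ Z → ∀ p ∈ s, p ∈ T := by
    intro s hs p hp
    rw [hTdef, Set.Finite.mem_toFinset]
    exact ⟨hs.1 p hp, hs.2 ▸ Multiset.dvd_prod hp⟩
  set F : Multiset (Associates M) → (↥T → ℕ) := fun s q => s.count q.val with hF
  have hle : ∀ {s t : Multiset (Associates M)}, s ∈ Z → t ∈ Z → F s ≤ F t → s ≤ t := by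
    intro s t hs ht hFle
    rw [Multiset.le_iff_count]
    intro p
    by_cases hp : p ∈ s
    · exact hFle ⟨p, hmemT hs p hp⟩
    · simp [Multiset.count_eq_zero_of_notMem hp]
  have hinj : Set.InjOn F Z := by
    intro s hs t ht heq
    exact le_antisymm (hle hs ht (le_of_eq heq)) (hle ht hs (le_of_eq heq.symm))
  have hanti : IsAntichain (· ≤ ·) (F '' Z) := by
    rintro x ⟨s, hs, rfl⟩ y ⟨t, ht, rfl⟩ hne hxy
    exact hne (congrArg F (factorizations_antichain_le hs ht (hle hs ht hxy)))
  have hpwo : Set.IsPWO (F '' Z) :=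
    (Set.IsPWO.pi (fun _ => Set.IsPWO.of_linearOrder (Set.univ : Set ℕ))).mono (by intro x _; simp)
  have hfin : (F '' Z).Finite := hanti.finite_of_partiallyWellOrderedOn hpwo
  exact Set.Finite.of_finite_image hfin hinj

lemma factorizations_nonempty {a : M} (ha : IsAtomicElem a) : (FactorizationsOf a).Nonempty := by
  obtain ⟨s, hirr, hassoc⟩ := ha
  refine ⟨s.map Associates.mk, ?_, ?_⟩
  · intro p hp
    obtain ⟨x, hx, rfl⟩ := Multiset.mem_map.1 hp
    exact mk_irreducible_iff.2 (hirr x hx)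
  · rw [Associates.prod_mk, Associates.mk_eq_mk_iff_associated]
    exact hassoc

end Aux

/-- A commutative cancellative monoid is an FFM if and only if it is atomic
and has the IDF property. -/
theorem ffm_iff_atomic_and_idf (M : Type*) [CancelCommMonoid M] :
    IsFFM M ↔ (∀ a : M, IsAtomicElem a) ∧ IsIDFMonoid M := by
  classical
  constructor
  · intro h
    constructor
    · intro a
      obtain ⟨s, hirr, hprod⟩ := (h a).1
      refine ⟨s.map (fun q : Associates M => Quot.out q), ?_, ?_⟩
      · intro p hp
        obtain ⟨q, hq, rfl⟩ := Multiset.mem_map.1 hp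
        exact mk_irreducible_iff.1 (by rw [Associates.quot_out]; exact hirr q hq)
      · rw [← Associates.mk_eq_mk_iff_associated, ← Associates.prod_mk, Multiset.map_map]
        rw [← hprod]
        congr 1
        conv_rhs => rw [← Multiset.map_id s]
        apply Multiset.map_congr rfl
        intro q _
        exact Associates.quot_out q
    · intro a
      refine Set.Finite.subset ((((h a).2).biUnion (fun t _ => (t.toFinset).finite_toSet)) :
        (⋃ t ∈ FactorizationsOf a, ((t.toFinset : Set (Associates M)))).Finite) ?_
      rintro p ⟨hpirr, hpdvd⟩
      obtain ⟨b, hb⟩ := hpdvd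
      obtain ⟨s, hsirr, hsprod⟩ := (h (Quot.out b)).1
      have hmem : (p ::ₘ s) ∈ FactorizationsOf a := by
        constructor
        · intro q hq
          rcases Multiset.mem_cons.1 hq with rfl | hq
          · exact hpirr
          · exact hsirr q hq
        · rw [Multiset.prod_cons, hsprod, Associates.quot_out, ← hb]
      simp only [Set.mem_iUnion]
      exact ⟨p ::ₘ s, hmem, Finset.mem_coe.2 (Multiset.mem_toFinset.2 (Multiset.mem_cons_self p s))⟩
  · rintro ⟨hatomic, hidf⟩ a
    exact ⟨factorizations_nonempty (hatomic a), factorizations_finite (hidf a)⟩
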